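/- In the d-dimensional hypercube Q_d with d ≥ 2, every independent set in the subgraph induced by N(x) ∪ N(y), for adjacent vertices x and y, has size at most d; i.e., the locality ℓ(Q_d) equals d. -/

import Mathlib

/-- The `d`-dimensional hypercube graph on `{0,1}^d`: two strings are adjacent
iff they differ on exactly one coordinate. -/
def hypercube (d : ℕ) : SimpleGraph (Fin d → Bool) where
  Adj x y := ∃! i, x i ≠ y i
  symm := by
    constructor
    rintro x y ⟨i, hi, hu⟩
    exact ⟨i, Ne.symm hi, fun j hj => hu j (Ne.symm hj)⟩
  loopless := by
    constructor
    rintro x ⟨i, hi, -⟩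
    exact hi rfl

/-- Flip coordinate `j`. -/
def hflip {d : ℕ} (x : Fin d → Bool) (j : Fin d) : Fin d → Bool :=
  Function.update x j (!x j)

lemma hflip_apply {d : ℕ} (x : Fin d → Bool) (j i : Fin d) :
    hflip x j i = if i = j then !x j else x i := by
  simp [hflip, Function.update]

lemma adj_hflip {d : ℕ} (x : Fin d → Bool) (j : Fin d) :
    (hypercube d).Adj x (hflip x j) := by
  refine ⟨j, ?_, ?_⟩
  · show x j ≠ hflip x j j
    rw [hflip_apply]; simp
  · intro i hi
    have hi : x i ≠ hflip x j i := hi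
    rw [hflip_apply] at hi
    by_contra h
    simp [h] at hi

lemma eq_hflip_of_adj {d : ℕ} {x u : Fin d → Bool} {j : Fin d}
    (h : (hypercube d).Adj x u) (hj : j = h.choose) : u = hflip x j := by
  obtain ⟨hi, hu⟩ := h.choose_spec
  funext i
  rw [hflip_apply]
  by_cases hij : i = j
  · subst hij hj
    simp only [if_pos rfl]
    exact Bool.eq_not_of_ne (Ne.symm hi)
  · rw [if_neg hij]
    by_contra hne
    exact hij (hj ▸ hu i (fun e => hne e.symm))

lemma hflip_diff {d : ℕ} (x y : Fin d → Bool) (j i : Fin d) :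
    (hflip x j i ≠ hflip y j i) ↔ (x i ≠ y i) := by
  rw [hflip_apply, hflip_apply]
  by_cases hij : i = j
  · subst hij; simp
  · simp [hij]

lemma adj_hflip_hflip {d : ℕ} {x y : Fin d → Bool} (hxy : (hypercube d).Adj x y)
    (j : Fin d) : (hypercube d).Adj (hflip x j) (hflip y j) := by
  obtain ⟨i0, h0, hu0⟩ := hxy
  refine ⟨i0, (hflip_diff x y j i0).mpr h0, fun i hi => hu0 i ((hflip_diff x y j i).mp hi)⟩

theorem hypercube_locality (d : ℕ) (hd : 2 ≤ d)
    (x y : Fin d → Bool) (hxy : (hypercube d).Adj x y) :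
    (∀ I : Finset (Fin d → Bool),
        (↑I : Set (Fin d → Bool)) ⊆ (hypercube d).neighborSet x ∪ (hypercube d).neighborSet y →
        (∀ u ∈ I, ∀ v ∈ I, ¬ (hypercube d).Adj u v) →
        I.card ≤ d) ∧
    (∃ I : Finset (Fin d → Bool),
        (↑I : Set (Fin d → Bool)) ⊆ (hypercube d).neighborSet x ∪ (hypercube d).neighborSet y ∧
        (∀ u ∈ I, ∀ v ∈ I, ¬ (hypercube d).Adj u v) ∧
        I.card = d) := by
  classical
  constructor
  · -- upper bound
    intro I hsub hind
    -- map each vertex to its flip coordinate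
    set g : (Fin d → Bool) → Fin d := fun u =>
      if h : (hypercube d).Adj x u then h.choose
      else if h' : (hypercube d).Adj y u then h'.choose else ⟨0, by omega⟩ with hg
    have hcard : I.card ≤ (Finset.univ : Finset (Fin d)).card := by
      apply Finset.card_le_card_of_injOn g (fun _ _ => Finset.mem_univ _)
      intro u hu v hv huv
      by_contra hne
      have hu' := hsub hu
      have hv' := hsub hv
      -- each of u, v is hflip of x or y at coordinate g u = g v
      have key : ∀ w, w ∈ I → w = hflip x (g w) ∨ w = hflip y (g w) := by
        intro w hw
        rcases hsub hw with h | h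
        · left
          have h : (hypercube d).Adj x w := h
          rw [hg]; simp only [dif_pos h]
          exact eq_hflip_of_adj h rfl
        · right
          have h : (hypercube d).Adj y w := h
          rw [hg]
          by_cases hx : (hypercube d).Adj x w
          · exfalso
            -- w adjacent to both x and y: impossible since x,y adjacent
            obtain ⟨i, hi, hui⟩ := hx
            obtain ⟨k, hk, huk⟩ := h
            obtain ⟨i0, h0, hu0⟩ := hxy
            by_cases hik : i = k
            · subst hik
              -- x and y differ in nothing? every coord where x ≠ y must be i... 
              -- x i ≠ w i and y i ≠ w i, so x i = y i (Bool), contradiction with i = i0?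
              have hxyi : x i = y i := by
                revert hi hk; cases x i <;> cases y i <;> cases w i <;> simp
              -- so i ≠ i0; but any coord j ≠ i has x j = w j and y j = w j hence x j = y j
              have : ∀ j, x j = y j := by
                intro j
                by_cases hji : j = i
                · subst hji; exact hxyi
                · have h1 : x j = w j := by
                    by_contra hc; exact hji (hui j hc)
                  have h2 : y j = w j := by
                    by_contra hc; exact hji (huk j hc)
                  rw [h1, h2]
              exact h0 (this i0)
            · -- i ≠ k: x,y differ exactly at i and k, contradicting unique diff
              have hdi : x i ≠ y i := by
                have hyi : y i = w i := by
                  by_contra hc; exact hik (huk i hc)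
                rw [hyi]; exact hi
              have hdk : x k ≠ y k := by
                have hxk : x k = w k := by
                  by_contra hc; exact hik (hui k hc).symm
                rw [hxk]; exact Ne.symm hk
              exact hik ((hu0 i hdi).trans (hu0 k hdk).symm)
          · simp only [dif_neg hx, dif_pos h]
            exact eq_hflip_of_adj h rfl
      rcases key u hu with h1 | h1 <;> rcases key v hv with h2 | h2
      · exact hne (by rw [h1, h2, huv])
      · refine hind u hu v hv ?_
        rw [h1, h2, huv]
        exact adj_hflip_hflip hxy (g v)
      · refine hind u hu v hv ?_
        rw [h1, h2, huv]
        exact ((adj_hflip_hflip hxy (g v)).symm)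
      · exact hne (by rw [h1, h2, huv])
    simpa using hcard
  · -- lower bound: N(x)
    refine ⟨Finset.image (hflip x) Finset.univ, ?_, ?_, ?_⟩
    · intro u hu
      simp only [Finset.coe_image, Set.mem_image] at hu
      obtain ⟨j, _, rfl⟩ := hu
      exact Or.inl (adj_hflip x j)
    · intro u hu v hv hadj
      simp only [Finset.mem_image] at hu hv
      obtain ⟨j, -, rfl⟩ := hu
      obtain ⟨k, -, rfl⟩ := hv
      by_cases hjk : j = k
      · subst hjk; exact (hypercube d).loopless.irrefl _ hadj
      · obtain ⟨i, hi, hui⟩ := hadj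
        have hdj : hflip x j j ≠ hflip x k j := by
          rw [hflip_apply, hflip_apply, if_pos rfl, if_neg hjk]; simp
        have hdk : hflip x j k ≠ hflip x k k := by
          rw [hflip_apply, hflip_apply, if_pos rfl, if_neg (Ne.symm hjk)]; simp
        exact hjk ((hui j hdj).trans (hui k hdk).symm)
    · rw [Finset.card_image_of_injective _ ?_, Finset.card_univ, Fintype.card_fin]
      intro j k hjk
      by_contra hne
      have := congrFun hjk j
      rw [hflip_apply, hflip_apply, if_pos rfl, if_neg hne] at this
      simp at this
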